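/- Proper time inequality: let a : [0,1] → ℝⁿ (n ≥ 2) be a continuously differentiable causal path, i.e. a'(t) ∈ Λ = {v : v₀ ≥ ‖v⃗‖} for every t ∈ [0,1]. Then its proper elapsed time satisfies ∫₀¹ √((a'(t)₀)² − ‖a'(t)⃗‖²) dt ≤ √(((a(1)−a(0))₀)² − ‖(a(1)−a(0))⃗‖²), i.e. ∫₀¹ γ̲(a'(t)) dt ≤ γ̲(a(1) − a(0)), where both sides are defined since a'(t) ∈ Λ and a(1) − a(0) ∈ Λ. -/

import Mathlib

open Finset

/-- Euclidean norm of the spatial part `v⃗ = (v₁, …, v_{n+1})` of a vector in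
the standard Lorentz vector space `ℝ^{n+2}` (so the dimension is `≥ 2`). -/
noncomputable def sNorm {n : ℕ} (v : Fin (n + 2) → ℝ) : ℝ :=
  Real.sqrt (∑ i ∈ univ.filter (fun i : Fin (n + 2) => i ≠ 0), (v i) ^ 2)

/-- The closed future cone `Λ = {v : v₀ ≥ ‖v⃗‖}`. -/
def Lam {n : ℕ} : Set (Fin (n + 2) → ℝ) := {v | sNorm v ≤ v 0}

/-- The Lorentz antinorm `γ̲(v) = √(v₀² − ‖v⃗‖²)`, defined and nonnegative on `Λ`. -/
noncomputable def anorm {n : ℕ} (v : Fin (n + 2) → ℝ) : ℝ :=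
  Real.sqrt ((v 0) ^ 2 - (sNorm v) ^ 2)


section Aux

variable {n : ℕ}

/-- Cauchy–Schwarz over a finset, sqrt form. -/
lemma cs_aux {ι : Type*} (s : Finset ι) (x y : ι → ℝ) :
    ∑ i ∈ s, x i * y i ≤ Real.sqrt (∑ i ∈ s, x i ^ 2) * Real.sqrt (∑ i ∈ s, y i ^ 2) := by
  have h := Finset.sum_mul_sq_le_sq_mul_sq s x y
  calc ∑ i ∈ s, x i * y i ≤ |∑ i ∈ s, x i * y i| := le_abs_self _
    _ = Real.sqrt ((∑ i ∈ s, x i * y i) ^ 2) := (Real.sqrt_sq_eq_abs _).symm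
    _ ≤ Real.sqrt ((∑ i ∈ s, x i ^ 2) * ∑ i ∈ s, y i ^ 2) := Real.sqrt_le_sqrt h
    _ = _ := Real.sqrt_mul (by positivity) _

/-- reverse Cauchy–Schwarz scalar inequality -/
lemma rev_cs_aux {a b c e : ℝ} (hc : 0 ≤ c) (hca : c ≤ a) (he : 0 ≤ e) (heb : e ≤ b) :
    Real.sqrt (a ^ 2 - c ^ 2) * Real.sqrt (b ^ 2 - e ^ 2) ≤ a * b - c * e := by
  rw [← Real.sqrt_mul (by nlinarith)]
  have h1 : (a ^ 2 - c ^ 2) * (b ^ 2 - e ^ 2) ≤ (a * b - c * e) ^ 2 := by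
    nlinarith [sq_nonneg (a * e - c * b)]
  calc Real.sqrt ((a ^ 2 - c ^ 2) * (b ^ 2 - e ^ 2)) ≤ Real.sqrt ((a * b - c * e) ^ 2) :=
        Real.sqrt_le_sqrt h1
    _ = a * b - c * e := Real.sqrt_sq (by nlinarith)

lemma sNorm_nonneg (v : Fin (n + 2) → ℝ) : 0 ≤ sNorm v := Real.sqrt_nonneg _

lemma sq_sNorm (v : Fin (n + 2) → ℝ) :
    (sNorm v) ^ 2 = ∑ i ∈ univ.filter (fun i : Fin (n + 2) => i ≠ 0), (v i) ^ 2 :=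
  Real.sq_sqrt (by positivity)

/-- splitting a full sum into the time component and the spatial sum -/
lemma sum_split_aux (w v : Fin (n + 2) → ℝ) :
    ∑ i, (if i = 0 then w 0 else -(w i)) * v i
      = w 0 * v 0 - ∑ i ∈ univ.filter (fun i : Fin (n + 2) => i ≠ 0), w i * v i := by
  rw [← Finset.sum_filter_add_sum_filter_not univ (fun i : Fin (n + 2) => i = 0)]
  have h1 : univ.filter (fun i : Fin (n + 2) => i = 0) = {0} := by
    ext i; simp
  rw [h1]
  simp only [Finset.sum_singleton, if_pos rfl]
  have h2 : ∑ i ∈ univ.filter (fun i : Fin (n + 2) => ¬ i = 0),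
      (if i = 0 then w 0 else -(w i)) * v i
      = ∑ i ∈ univ.filter (fun i : Fin (n + 2) => i ≠ 0), -(w i * v i) := by
    apply Finset.sum_congr rfl
    intro i hi
    simp only [Finset.mem_filter] at hi
    rw [if_neg hi.2]; ring
  rw [h2, Finset.sum_neg_distrib]
  norm_num [sub_eq_add_neg]

/-- key pointwise reverse CS inequality on Λ -/
lemma key_aux (w v : Fin (n + 2) → ℝ) (hw : w ∈ Lam) (hv : v ∈ Lam) :
    anorm v * anorm w ≤ ∑ i, (if i = 0 then w 0 else -(w i)) * v i := by
  rw [sum_split_aux]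
  have hcs : ∑ i ∈ univ.filter (fun i : Fin (n + 2) => i ≠ 0), w i * v i
      ≤ sNorm w * sNorm v := cs_aux _ _ _
  have h1 : anorm v * anorm w ≤ v 0 * w 0 - sNorm v * sNorm w := by
    unfold anorm
    exact rev_cs_aux (sNorm_nonneg v) hv (sNorm_nonneg w) hw
  nlinarith

end Aux

section FTC

open MeasureTheory

variable {n : ℕ} {a a' : ℝ → (Fin (n + 2) → ℝ)}

lemma comp_deriv_aux (hderiv : ∀ t ∈ Set.Icc (0 : ℝ) 1, HasDerivAt a (a' t) t)
    (c : Fin (n + 2) → ℝ) {t : ℝ} (ht : t ∈ Set.Icc (0 : ℝ) 1) :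
    HasDerivAt (fun t => ∑ i, c i * a t i) (∑ i, c i * a' t i) t := by
  apply HasDerivAt.fun_sum
  intro i _
  apply HasDerivAt.const_mul
  have h := ((ContinuousLinearMap.proj (R := ℝ) (φ := fun _ : Fin (n+2) => ℝ) i).hasFDerivAt.comp
    t (hderiv t ht).hasFDerivAt).hasDerivAt
  exact hasDerivAt_pi.mp (hderiv t ht) i

lemma cont_comb_aux (hcont : ContinuousOn a' (Set.Icc (0 : ℝ) 1)) (c : Fin (n + 2) → ℝ) :
    ContinuousOn (fun t => ∑ i, c i * a' t i) (Set.Icc (0 : ℝ) 1) := by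
  apply continuousOn_finset_sum
  intro i _
  exact continuousOn_const.mul ((continuous_apply i).comp_continuousOn hcont)

lemma ftc_aux (hderiv : ∀ t ∈ Set.Icc (0 : ℝ) 1, HasDerivAt a (a' t) t)
    (hcont : ContinuousOn a' (Set.Icc (0 : ℝ) 1)) (c : Fin (n + 2) → ℝ) :
    ∫ t in (0 : ℝ)..1, ∑ i, c i * a' t i = ∑ i, c i * (a 1 i - a 0 i) := by
  have huIcc : Set.uIcc (0 : ℝ) 1 = Set.Icc 0 1 := Set.uIcc_of_le (by norm_num)
  have hint : IntervalIntegrable (fun t => ∑ i, c i * a' t i) volume 0 1 :=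
    (huIcc ▸ cont_comb_aux hcont c).intervalIntegrable
  rw [intervalIntegral.integral_eq_sub_of_hasDerivAt
    (fun t ht => comp_deriv_aux hderiv c (huIcc ▸ ht)) hint]
  rw [← Finset.sum_sub_distrib]
  apply Finset.sum_congr rfl
  intro i _
  ring

end FTC

/-- proper time inequality. For a continuously differentiable
causal path `a : [0,1] → ℝ^{n+2}` (i.e. `a' t ∈ Λ` for all `t ∈ [0,1]`), the
proper elapsed time satisfies `∫₀¹ γ̲(a'(t)) dt ≤ γ̲(a 1 − a 0)`. -/
theorem proper_time_le_anorm_of_displacement {n : ℕ}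
    (a a' : ℝ → (Fin (n + 2) → ℝ))
    (hderiv : ∀ t ∈ Set.Icc (0 : ℝ) 1, HasDerivAt a (a' t) t)
    (hcont : ContinuousOn a' (Set.Icc (0 : ℝ) 1))
    (hcausal : ∀ t ∈ Set.Icc (0 : ℝ) 1, a' t ∈ Lam) :
    (∫ t in (0 : ℝ)..1, anorm (a' t)) ≤ anorm (a 1 - a 0) := by
  classical
  have huIcc : Set.uIcc (0 : ℝ) 1 = Set.Icc 0 1 := Set.uIcc_of_le (by norm_num)
  set d : Fin (n + 2) → ℝ := a 1 - a 0 with hd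
  have hdi : ∀ i, d i = a 1 i - a 0 i := fun i => rfl
  have hanorm_cont : Continuous (anorm (n := n)) := by
    unfold anorm sNorm
    refine Real.continuous_sqrt.comp (Continuous.sub (by fun_prop) ?_)
    exact (Real.continuous_sqrt.comp (by fun_prop)).pow 2
  have hconta : ContinuousOn (fun t => anorm (a' t)) (Set.Icc (0 : ℝ) 1) :=
    hanorm_cont.comp_continuousOn hcont
  have hinta : IntervalIntegrable (fun t => anorm (a' t)) MeasureTheory.volume 0 1 :=
    (huIcc ▸ hconta).intervalIntegrable
  have hnonneg : ∀ t ∈ Set.Icc (0 : ℝ) 1, (0 : ℝ) ≤ a' t 0 := fun t ht =>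
    le_trans (sNorm_nonneg _) (hcausal t ht)
  have hd0 : 0 ≤ d 0 := by
    have hc0 : ∀ v : Fin (n + 2) → ℝ,
        ∑ i, (if i = (0 : Fin (n + 2)) then (1 : ℝ) else 0) * v i = v 0 := by
      intro v; simp [ite_mul]
    have h := ftc_aux hderiv hcont (fun i => if i = 0 then (1 : ℝ) else 0)
    simp only [hc0] at h
    have h' : d 0 = ∫ t in (0 : ℝ)..1, a' t 0 := by rw [h, hdi 0]
    rw [h']
    exact intervalIntegral.integral_nonneg (by norm_num) hnonneg
  by_cases hpos : 0 < (d 0) ^ 2 - (sNorm d) ^ 2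
  · -- nondegenerate case
    have hsd := sNorm_nonneg d
    have hdLam : d ∈ Lam := by
      simp only [Lam, Set.mem_setOf_eq]; nlinarith
    have hand : 0 < anorm d := Real.sqrt_pos.mpr hpos
    set c : Fin (n + 2) → ℝ := fun i => if i = 0 then d 0 else -(d i) with hc
    have hptwise : ∀ t ∈ Set.Icc (0 : ℝ) 1,
        anorm (a' t) * anorm d ≤ ∑ i, c i * a' t i := fun t ht =>
      key_aux d (a' t) hdLam (hcausal t ht)
    have hintc : IntervalIntegrable (fun t => ∑ i, c i * a' t i) MeasureTheory.volume 0 1 :=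
      (huIcc ▸ cont_comb_aux hcont c).intervalIntegrable
    have h1 : (∫ t in (0 : ℝ)..1, anorm (a' t) * anorm d)
        ≤ ∫ t in (0 : ℝ)..1, ∑ i, c i * a' t i :=
      intervalIntegral.integral_mono_on (by norm_num) (hinta.mul_const _) hintc hptwise
    have h2 : (∫ t in (0 : ℝ)..1, ∑ i, c i * a' t i) = anorm d * anorm d := by
      rw [ftc_aux hderiv hcont c]
      have he : ∑ i, c i * (a 1 i - a 0 i) = ∑ i, (if i = 0 then d 0 else -(d i)) * d i := by
        apply Finset.sum_congr rfl; intro i _; rw [← hdi i]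
      rw [he, sum_split_aux]
      unfold anorm
      rw [Real.mul_self_sqrt hpos.le, sq_sNorm]
      have h3 : ∑ i ∈ univ.filter (fun i : Fin (n + 2) => i ≠ 0), d i * d i
          = ∑ i ∈ univ.filter (fun i : Fin (n + 2) => i ≠ 0), (d i) ^ 2 := by
        apply Finset.sum_congr rfl; intros; ring
      rw [h3]; ring
    have h4 : (∫ t in (0 : ℝ)..1, anorm (a' t)) * anorm d ≤ anorm d * anorm d := by
      rw [← intervalIntegral.integral_mul_const]
      exact h1.trans_eq h2
    exact le_of_mul_le_mul_right h4 hand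
  · -- degenerate case : the displacement is lightlike or worse
    push_neg at hpos
    have had : anorm d = 0 := Real.sqrt_eq_zero_of_nonpos hpos
    rw [had]
    set s : ℝ := sNorm d with hs
    have hs0 : 0 ≤ s := sNorm_nonneg d
    have hds : d 0 ≤ s := by nlinarith
    set u : Fin (n + 2) → ℝ := fun i => if i = 0 then 1 else d i / s with hu
    have hu0 : u 0 = 1 := if_pos rfl
    have husum : ∑ i ∈ univ.filter (fun i : Fin (n + 2) => i ≠ 0), (u i) ^ 2
        = (∑ i ∈ univ.filter (fun i : Fin (n + 2) => i ≠ 0), (d i) ^ 2) / s ^ 2 := by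
      rw [Finset.sum_div]
      apply Finset.sum_congr rfl
      intro i hi
      have hne : i ≠ 0 := (Finset.mem_filter.mp hi).2
      simp [hu, hne, div_pow]
    have husN : sNorm u ≤ 1 := by
      unfold sNorm
      rw [husum, ← sq_sNorm d, ← hs]
      rcases eq_or_ne s 0 with h | h
      · simp [h]
      · rw [div_self (by positivity)]
        simp
    set c : Fin (n + 2) → ℝ := fun i => if i = 0 then u 0 else -(u i) with hc
    set F : ℝ → ℝ := fun t => ∑ i, c i * a' t i with hF
    have hFnonneg : ∀ t ∈ Set.Icc (0 : ℝ) 1, 0 ≤ F t := by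
      intro t ht
      rw [hF]
      simp only
      rw [hc]
      rw [sum_split_aux u (a' t)]
      have hcs := cs_aux (univ.filter (fun i : Fin (n + 2) => i ≠ 0)) u (a' t)
      have hL : sNorm (a' t) ≤ a' t 0 := hcausal t ht
      have hsa := sNorm_nonneg (a' t)
      have hsu := sNorm_nonneg u
      rw [hu0]
      unfold sNorm at hL hsa hsu husN hcs
      nlinarith
    have hFint : IntervalIntegrable F MeasureTheory.volume 0 1 :=
      (huIcc ▸ cont_comb_aux hcont c).intervalIntegrable
    have hud : ∑ i ∈ univ.filter (fun i : Fin (n + 2) => i ≠ 0), u i * d i = s := by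
      have h1 : ∑ i ∈ univ.filter (fun i : Fin (n + 2) => i ≠ 0), u i * d i
          = (∑ i ∈ univ.filter (fun i : Fin (n + 2) => i ≠ 0), (d i) ^ 2) / s := by
        rw [Finset.sum_div]
        apply Finset.sum_congr rfl
        intro i hi
        have hne : i ≠ 0 := (Finset.mem_filter.mp hi).2
        simp [hu, hne]
        ring
      rw [h1, ← sq_sNorm d, ← hs]
      rcases eq_or_ne s 0 with h | h
      · simp [h]
      · rw [pow_two, mul_div_assoc, div_self h, mul_one]
    have hFle : (∫ t in (0 : ℝ)..1, F t) ≤ 0 := by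
      rw [hF]
      simp only
      rw [ftc_aux hderiv hcont c]
      have he : ∑ i, c i * (a 1 i - a 0 i) = ∑ i, (if i = 0 then u 0 else -(u i)) * d i := by
        apply Finset.sum_congr rfl; intro i _; rw [← hdi i]
      rw [he, sum_split_aux, hud, hu0]
      linarith
    have hFge : 0 ≤ ∫ t in (0 : ℝ)..1, F t :=
      intervalIntegral.integral_nonneg (by norm_num) hFnonneg
    have heq0 : ∫ t in Set.Ioc (0 : ℝ) 1, F t = 0 := by
      rw [← intervalIntegral.integral_of_le (by norm_num : (0:ℝ) ≤ 1)]
      linarith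
    have hae_nonneg : 0 ≤ᵐ[MeasureTheory.volume.restrict (Set.Ioc (0 : ℝ) 1)] F := by
      filter_upwards [MeasureTheory.ae_restrict_mem measurableSet_Ioc] with t ht
      exact hFnonneg t (Set.Ioc_subset_Icc_self ht)
    have hFae : F =ᵐ[MeasureTheory.volume.restrict (Set.Ioc (0 : ℝ) 1)] 0 :=
      (MeasureTheory.integral_eq_zero_iff_of_nonneg_ae hae_nonneg hFint.1).mp heq0
    have haae : (fun t => anorm (a' t))
        =ᵐ[MeasureTheory.volume.restrict (Set.Ioc (0 : ℝ) 1)] 0 := by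
      filter_upwards [hFae, MeasureTheory.ae_restrict_mem measurableSet_Ioc] with t hFt ht
      have htI : t ∈ Set.Icc (0 : ℝ) 1 := Set.Ioc_subset_Icc_self ht
      have hL : sNorm (a' t) ≤ a' t 0 := hcausal t htI
      have hFt' : F t = 0 := hFt
      rw [hF] at hFt'
      simp only at hFt'
      rw [hc] at hFt'
      rw [sum_split_aux u (a' t), hu0] at hFt'
      have hcs := cs_aux (univ.filter (fun i : Fin (n + 2) => i ≠ 0)) u (a' t)
      have hsa := sNorm_nonneg (a' t)
      have hsu := sNorm_nonneg u
      have heq : a' t 0 = sNorm (a' t) := by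
        unfold sNorm at hL hsa hsu husN hcs ⊢
        nlinarith
      show anorm (a' t) = 0
      unfold anorm
      rw [heq]
      simp
    have hzero : ∫ t in (0 : ℝ)..1, anorm (a' t) = 0 := by
      rw [intervalIntegral.integral_of_le (by norm_num : (0:ℝ) ≤ 1)]
      exact MeasureTheory.integral_eq_zero_of_ae haae
    linarith
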